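/- In a maximal position of the Game of Cycles played on a path (ignoring the sink–source rule at the two end vertices), if the two end edges of the path are directed in the same direction along the path, then the number of unmarkable edges is even; if the two end edges are directed in opposite directions, then the number of unmarkable edges is odd. -/
import Mathlib


/-- Legality of a position on a path with edges `1, …, n` (edge `i` joins `v_{i-1}` to `v_i`;
`some true` means directed from `v_{i-1}` toward `v_i`, `some false` the reverse, `none`
undirected).  The sink–source rule is imposed only at the internal vertices `v_1, …, v_{n-1}`:
the vertex `v_i` between edges `i` and `i+1` may not have both incident edges directed into it
(a sink) nor both directed out of it (a source). -/
def PathLegal (n : ℕ) (pos : ℕ → Option Bool) : Prop :=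
  ∀ i : ℕ, 1 ≤ i → i + 1 ≤ n →
    ¬(pos i = some true ∧ pos (i + 1) = some false) ∧
    ¬(pos i = some false ∧ pos (i + 1) = some true)

/-- If directing an undirected edge `i` as `b` is illegal, then a neighbouring edge is
directed as `!b`. -/
lemma unmark_aux (n : ℕ) (pos : ℕ → Option Bool) (hlegal : PathLegal n pos)
    (i : ℕ) (b : Bool)
    (hb : ¬ PathLegal n (Function.update pos i (some b))) :
    (i + 1 ≤ n ∧ pos (i + 1) = some (!b)) ∨ (2 ≤ i ∧ pos (i - 1) = some (!b)) := by
  by_contra h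
  push_neg at h
  obtain ⟨h1, h2⟩ := h
  apply hb
  intro j hj1 hj2
  rcases eq_or_ne j i with rfl | hji
  · have e1 : Function.update pos j (some b) j = some b := Function.update_self _ _ _
    have e2 : Function.update pos j (some b) (j + 1) = pos (j + 1) :=
      Function.update_of_ne (by omega) _ _
    have h3 := h1 hj2
    rw [e1, e2]
    cases b <;> simp_all
  · rcases eq_or_ne (j + 1) i with hji2 | hji2
    · have e1 : Function.update pos i (some b) j = pos j :=
        Function.update_of_ne (by omega) _ _
      have e2 : Function.update pos i (some b) (j + 1) = some b := by
        rw [hji2]; exact Function.update_self _ _ _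
      have h3 : pos (i - 1) ≠ some (!b) := h2 (by omega)
      have hj : j = i - 1 := by omega
      rw [e1, e2, hj]
      cases b <;> simp_all
    · have e1 : Function.update pos i (some b) j = pos j :=
        Function.update_of_ne hji _ _
      have e2 : Function.update pos i (some b) (j + 1) = pos (j + 1) :=
        Function.update_of_ne hji2 _ _
      rw [e1, e2]
      exact hlegal j hj1 hj2

/-- In a maximal position of the Game of Cycles on a path with `n ≥ 2` edges (end vertices
exempt from the sink–source rule): both end edges are directed, the position is legal, and
every undirected edge is unmarkable.  Then the number of unmarkable (undirected) edges is even
if the two end edges are directed the same way along the path, and odd if they are directed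
in opposite directions. -/
theorem path_unmarkable_parity (n : ℕ) (hn : 2 ≤ n) (pos : ℕ → Option Bool)
    (hlegal : PathLegal n pos)
    (hend1 : pos 1 ≠ none) (hendn : pos n ≠ none)
    (hmax : ∀ i : ℕ, 1 ≤ i → i ≤ n → pos i = none →
      ∀ b : Bool, ¬ PathLegal n (Function.update pos i (some b))) :
    (pos 1 = pos n →
      Even (((Finset.Icc 1 n).filter fun i => pos i = none).card)) ∧
    (pos 1 ≠ pos n →
      Odd (((Finset.Icc 1 n).filter fun i => pos i = none).card)) := by
  obtain ⟨a, ha⟩ := Option.ne_none_iff_exists'.mp hend1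
  have key : ∀ k : ℕ, 1 ≤ k → k ≤ n → pos k ≠ none →
      (pos k = pos 1 ↔ Even (((Finset.Icc 1 k).filter fun i => pos i = none).card)) := by
    intro k
    induction k using Nat.strong_induction_on with
    | _ k ih =>
      intro hk1 hkn hk
      rcases eq_or_ne k 1 with rfl | hk1'
      · have : ((Finset.Icc 1 1).filter fun i => pos i = none) = ∅ := by
          rw [Finset.Icc_self, Finset.filter_singleton]
          simp [hend1]
        rw [this]
        simp
      · have hk2 : 2 ≤ k := by omega
        obtain ⟨c, hc⟩ := Option.ne_none_iff_exists'.mp hk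
        rcases hprev : pos (k - 1) with _ | a'
        · -- previous edge undirected
          have hk1n : 1 ≤ k - 1 := by omega
          have hkn1 : k - 1 ≤ n := by omega
          have htrue := unmark_aux n pos hlegal (k - 1) true
            (hmax (k - 1) hk1n hkn1 hprev true)
          have hfalse := unmark_aux n pos hlegal (k - 1) false
            (hmax (k - 1) hk1n hkn1 hprev false)
          have hkk : k - 1 + 1 = k := by omega
          rw [hkk] at htrue hfalse
          have hkk2 : k - 1 - 1 = k - 2 := by omega
          rw [hkk2] at htrue hfalse
          -- derive: 3 ≤ k and pos (k-2) = some (!c)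
          have hmain : 3 ≤ k ∧ pos (k - 2) = some (!c) := by
            rcases htrue with ⟨_, hT⟩ | ⟨hT1, hT2⟩
            · rcases hfalse with ⟨_, hF⟩ | ⟨hF1, hF2⟩
              · rw [hT] at hF; simp at hF
              · rw [hT] at hc
                constructor
                · omega
                · rw [hF2]; simp_all
            · rcases hfalse with ⟨_, hF⟩ | ⟨hF1, hF2⟩
              · rw [hF] at hc
                constructor
                · omega
                · rw [hT2]; simp_all
              · rw [hT2] at hF2; simp at hF2
          obtain ⟨hk3, hprev2⟩ := hmain
          have hihp : pos (k - 2) ≠ none := by rw [hprev2]; simp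
          have IH := ih (k - 2) (by omega) (by omega) (by omega) hihp
          -- filter equality
          have hfeq : ((Finset.Icc 1 k).filter fun i => pos i = none)
              = insert (k - 1) ((Finset.Icc 1 (k - 2)).filter fun i => pos i = none) := by
            ext i
            simp only [Finset.mem_filter, Finset.mem_Icc, Finset.mem_insert]
            constructor
            · rintro ⟨⟨hi1, hi2⟩, hiP⟩
              rcases eq_or_ne i (k - 1) with rfl | hik
              · exact Or.inl rfl
              · have hik' : i ≠ k := by rintro rfl; rw [hiP] at hc; simp at hc
                exact Or.inr ⟨⟨hi1, by omega⟩, hiP⟩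
            · rintro (rfl | ⟨⟨hi1, hi2⟩, hiP⟩)
              · exact ⟨⟨by omega, by omega⟩, hprev⟩
              · exact ⟨⟨hi1, by omega⟩, hiP⟩
          have hnotmem : k - 1 ∉ ((Finset.Icc 1 (k - 2)).filter fun i => pos i = none) := by
            simp only [Finset.mem_filter, Finset.mem_Icc]
            rintro ⟨⟨_, h⟩, _⟩; omega
          rw [hfeq, Finset.card_insert_of_notMem hnotmem, Nat.even_add_one, ← IH]
          rw [hc, hprev2, ha]
          cases c <;> cases a <;> simp
        · -- previous edge directed: must equal pos k
          have hleg := hlegal (k - 1) (by omega) (by omega)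
          have hkk : k - 1 + 1 = k := by omega
          rw [hkk] at hleg
          have heq : a' = c := by
            rw [hprev, hc] at hleg
            cases a' <;> cases c <;> simp_all
          subst heq
          have hihp : pos (k - 1) ≠ none := by rw [hprev]; simp
          have IH := ih (k - 1) (by omega) (by omega) (by omega) hihp
          have hfeq : ((Finset.Icc 1 k).filter fun i => pos i = none)
              = ((Finset.Icc 1 (k - 1)).filter fun i => pos i = none) := by
            ext i
            simp only [Finset.mem_filter, Finset.mem_Icc]
            constructor
            · rintro ⟨⟨hi1, hi2⟩, hiP⟩
              have hik' : i ≠ k := by rintro rfl; rw [hiP] at hc; simp at hc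
              exact ⟨⟨hi1, by omega⟩, hiP⟩
            · rintro ⟨⟨hi1, hi2⟩, hiP⟩
              exact ⟨⟨hi1, by omega⟩, hiP⟩
          rw [hfeq, ← IH, hprev, hc]
  have hkey := key n (by omega) le_rfl hendn
  constructor
  · intro h
    exact hkey.mp h.symm
  · intro h
    rw [← Nat.not_even_iff_odd]
    intro he
    exact h (hkey.mpr he).symm
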